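/- Let U = (u_{a,x})_{a,x=1}^2 be a bi-unitary matrix over a unital C*-algebra A whose entries are partial isometries satisfying u_{a,x} u_{a,y}^* = 0 for x ≠ y and u_{a,x} u_{b,x}^* = 0 for a ≠ b. Then u_{1,1}^* u_{1,1} = u_{2,2}^* u_{2,2}, u_{1,2}^* u_{1,2} = u_{2,1}^* u_{2,1} = 1 − u_{1,1}^* u_{1,1}, and the elements u_{1,1}^* u_{1,1}, u_{1,1}^* u_{2,2}, u_{2,2}^* u_{1,1}, u_{1,2}^* u_{2,1}, u_{2,1}^* u_{1,2} pairwise commute. -/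
import Mathlib


/-- structure of the game algebra generators for K₂ (indices 1,2
rendered as 0,1 in `Fin 2`): the nonzero two-letter words commute. -/
theorem stmt18 {A : Type*} [NormedRing A] [StarRing A] [CStarRing A]
    [CompleteSpace A] [NormedAlgebra ℂ A] [StarModule ℂ A]
    (u : Fin 2 → Fin 2 → A)
    (hUU : ∀ a b : Fin 2, ∑ x, u a x * star (u b x) = if a = b then 1 else 0)
    (hUU' : ∀ x y : Fin 2, ∑ a, star (u a x) * u a y = if x = y then 1 else 0)
    (hUt : ∀ x y : Fin 2, ∑ a, u a x * star (u a y) = if x = y then 1 else 0)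
    (hUt' : ∀ a b : Fin 2, ∑ x, star (u a x) * u b x = if a = b then 1 else 0)
    (hpi : ∀ a x : Fin 2, u a x * star (u a x) * u a x = u a x)
    (hrow : ∀ (a : Fin 2) {x y : Fin 2}, x ≠ y → u a x * star (u a y) = 0)
    (hcol : ∀ (x : Fin 2) {a b : Fin 2}, a ≠ b → u a x * star (u b x) = 0) :
    star (u 0 0) * u 0 0 = star (u 1 1) * u 1 1 ∧
    star (u 0 1) * u 0 1 = star (u 1 0) * u 1 0 ∧
    star (u 0 1) * u 0 1 = 1 - star (u 0 0) * u 0 0 ∧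
    (∀ x ∈ [star (u 0 0) * u 0 0, star (u 0 0) * u 1 1, star (u 1 1) * u 0 0,
            star (u 0 1) * u 1 0, star (u 1 0) * u 0 1],
     ∀ y ∈ [star (u 0 0) * u 0 0, star (u 0 0) * u 1 1, star (u 1 1) * u 0 0,
            star (u 0 1) * u 1 0, star (u 1 0) * u 0 1],
      x * y = y * x) := by
  -- orthogonality facts
  have r01 : u 0 0 * star (u 0 1) = 0 := hrow 0 (by decide)
  have r10 : u 0 1 * star (u 0 0) = 0 := hrow 0 (by decide)
  have r01' : u 1 0 * star (u 1 1) = 0 := hrow 1 (by decide)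
  have r10' : u 1 1 * star (u 1 0) = 0 := hrow 1 (by decide)
  have c0 : u 0 0 * star (u 1 0) = 0 := hcol 0 (by decide)
  have c0' : u 1 0 * star (u 0 0) = 0 := hcol 0 (by decide)
  have c1 : u 0 1 * star (u 1 1) = 0 := hcol 1 (by decide)
  have c1' : u 1 1 * star (u 0 1) = 0 := hcol 1 (by decide)
  -- expanded unitarity relations
  have e1 : star (u 0 0) * u 0 0 + star (u 0 1) * u 0 1 = 1 := by
    have h := hUt' 0 0; simpa [Fin.sum_univ_two] using h
  have e2 : star (u 0 1) * u 0 1 + star (u 1 1) * u 1 1 = 1 := by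
    have h := hUU' 1 1; simpa [Fin.sum_univ_two] using h
  have e3 : star (u 0 0) * u 0 0 + star (u 1 0) * u 1 0 = 1 := by
    have h := hUU' 0 0; simpa [Fin.sum_univ_two] using h
  have f1 : u 0 0 * star (u 0 0) + u 0 1 * star (u 0 1) = 1 := by
    have h := hUU 0 0; simpa [Fin.sum_univ_two] using h
  have f2 : u 0 1 * star (u 0 1) + u 1 1 * star (u 1 1) = 1 := by
    have h := hUt 1 1; simpa [Fin.sum_univ_two] using h
  have f3 : u 0 0 * star (u 0 0) + u 1 0 * star (u 1 0) = 1 := by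
    have h := hUt 0 0; simpa [Fin.sum_univ_two] using h
  -- the three algebraic identities
  have eqA : star (u 0 0) * u 0 0 = star (u 1 1) * u 1 1 := by
    have h1 : star (u 0 0) * u 0 0 = 1 - star (u 0 1) * u 0 1 := eq_sub_of_add_eq e1
    have h2 : star (u 1 1) * u 1 1 = 1 - star (u 0 1) * u 0 1 := eq_sub_of_add_eq' e2
    rw [h1, h2]
  have eqB : star (u 0 1) * u 0 1 = star (u 1 0) * u 1 0 := by
    have h1 : star (u 0 1) * u 0 1 = 1 - star (u 0 0) * u 0 0 := eq_sub_of_add_eq' e1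
    have h2 : star (u 1 0) * u 1 0 = 1 - star (u 0 0) * u 0 0 := eq_sub_of_add_eq' e3
    rw [h1, h2]
  have eqC : star (u 0 1) * u 0 1 = 1 - star (u 0 0) * u 0 0 := eq_sub_of_add_eq' e1
  -- range projection equalities
  have hq00 : u 0 0 * star (u 0 0) = u 1 1 * star (u 1 1) := by
    have h1 : u 0 0 * star (u 0 0) = 1 - u 0 1 * star (u 0 1) := eq_sub_of_add_eq f1
    have h2 : u 1 1 * star (u 1 1) = 1 - u 0 1 * star (u 0 1) := eq_sub_of_add_eq' f2
    rw [h1, h2]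
  have hq01 : u 0 1 * star (u 0 1) = u 1 0 * star (u 1 0) := by
    have h1 : u 0 1 * star (u 0 1) = 1 - u 0 0 * star (u 0 0) := eq_sub_of_add_eq' f1
    have h2 : u 1 0 * star (u 1 0) = 1 - u 0 0 * star (u 0 0) := eq_sub_of_add_eq' f3
    rw [h1, h2]
  -- helper for absorbing a zero product
  have zmul : ∀ x y : A, x * y = 0 → ∀ w : A, x * (y * w) = 0 := by
    intro x y h w; rw [← mul_assoc, h, zero_mul]
  -- core absorption identities
  have k00 : u 0 0 * (star (u 0 0) * u 0 0) = u 0 0 := by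
    rw [← mul_assoc]; exact hpi 0 0
  have k11 : u 1 1 * (star (u 1 1) * u 1 1) = u 1 1 := by
    rw [← mul_assoc]; exact hpi 1 1
  have k01 : u 0 1 * (star (u 0 1) * u 0 1) = u 0 1 := by
    rw [← mul_assoc]; exact hpi 0 1
  have k10 : u 1 0 * (star (u 1 0) * u 1 0) = u 1 0 := by
    rw [← mul_assoc]; exact hpi 1 0
  -- mixed absorptions
  have m1 : u 0 0 * (star (u 0 0) * u 1 1) = u 1 1 := by
    rw [← mul_assoc, hq00, mul_assoc]; exact k11
  have m2 : u 1 1 * (star (u 1 1) * u 0 0) = u 0 0 := by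
    rw [← mul_assoc, ← hq00, mul_assoc]; exact k00
  have m3 : u 0 1 * (star (u 0 1) * u 1 0) = u 1 0 := by
    rw [← mul_assoc, hq01, mul_assoc]; exact k10
  have m4 : u 1 0 * (star (u 1 0) * u 0 1) = u 0 1 := by
    rw [← mul_assoc, ← hq01, mul_assoc]; exact k01
  -- the twenty products
  have ps : star (u 0 0) * u 0 0 * (star (u 0 0) * u 1 1) = star (u 0 0) * u 1 1 := by
    rw [mul_assoc, m1]
  have sp : star (u 0 0) * u 1 1 * (star (u 0 0) * u 0 0) = star (u 0 0) * u 1 1 := by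
    rw [eqA, mul_assoc, k11]
  have pt : star (u 0 0) * u 0 0 * (star (u 1 1) * u 0 0) = star (u 1 1) * u 0 0 := by
    rw [eqA, mul_assoc, m2]
  have tp : star (u 1 1) * u 0 0 * (star (u 0 0) * u 0 0) = star (u 1 1) * u 0 0 := by
    rw [mul_assoc, k00]
  have pa : star (u 0 0) * u 0 0 * (star (u 0 1) * u 1 0) = 0 := by
    rw [eqA, mul_assoc, zmul _ _ c1', mul_zero]
  have ap : star (u 0 1) * u 1 0 * (star (u 0 0) * u 0 0) = 0 := by
    rw [mul_assoc, zmul _ _ c0', mul_zero]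
  have pb : star (u 0 0) * u 0 0 * (star (u 1 0) * u 0 1) = 0 := by
    rw [eqA, mul_assoc, zmul _ _ r10', mul_zero]
  have bp : star (u 1 0) * u 0 1 * (star (u 0 0) * u 0 0) = 0 := by
    rw [mul_assoc, zmul _ _ r10, mul_zero]
  have st : star (u 0 0) * u 1 1 * (star (u 1 1) * u 0 0) = star (u 0 0) * u 0 0 := by
    rw [mul_assoc, m2]
  have ts : star (u 1 1) * u 0 0 * (star (u 0 0) * u 1 1) = star (u 0 0) * u 0 0 := by
    rw [mul_assoc, m1, ← eqA]
  have sa : star (u 0 0) * u 1 1 * (star (u 0 1) * u 1 0) = 0 := by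
    rw [mul_assoc, zmul _ _ c1', mul_zero]
  have as' : star (u 0 1) * u 1 0 * (star (u 0 0) * u 1 1) = 0 := by
    rw [mul_assoc, zmul _ _ c0', mul_zero]
  have sb : star (u 0 0) * u 1 1 * (star (u 1 0) * u 0 1) = 0 := by
    rw [mul_assoc, zmul _ _ r10', mul_zero]
  have bs : star (u 1 0) * u 0 1 * (star (u 0 0) * u 1 1) = 0 := by
    rw [mul_assoc, zmul _ _ r10, mul_zero]
  have ta : star (u 1 1) * u 0 0 * (star (u 0 1) * u 1 0) = 0 := by
    rw [mul_assoc, zmul _ _ r01, mul_zero]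
  have at' : star (u 0 1) * u 1 0 * (star (u 1 1) * u 0 0) = 0 := by
    rw [mul_assoc, zmul _ _ r01', mul_zero]
  have tb : star (u 1 1) * u 0 0 * (star (u 1 0) * u 0 1) = 0 := by
    rw [mul_assoc, zmul _ _ c0, mul_zero]
  have bt : star (u 1 0) * u 0 1 * (star (u 1 1) * u 0 0) = 0 := by
    rw [mul_assoc, zmul _ _ c1, mul_zero]
  have ab : star (u 0 1) * u 1 0 * (star (u 1 0) * u 0 1) = star (u 0 1) * u 0 1 := by
    rw [mul_assoc, m4]
  have ba : star (u 1 0) * u 0 1 * (star (u 0 1) * u 1 0) = star (u 0 1) * u 0 1 := by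
    rw [mul_assoc, m3, eqB]
  refine ⟨eqA, eqB, eqC, ?_⟩
  intro x hx y hy
  fin_cases hx <;> fin_cases hy <;>
    simp only [ps, sp, pt, tp, pa, ap, pb, bp, st, ts, sa, as', sb, bs, ta, at', tb, bt, ab, ba]
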